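/- If B is an interval Boolean algebra (the algebra of subsets of a linear order I generated by half-open intervals [x,y)), then d_2(B) = d(B), i.e., the least number of 2-linked sets covering B∖{0} equals the least number of centered sets covering B∖{0}. -/

import Mathlib

open Cardinal

/-- The elements of the Boolean subalgebra generated by `S`. -/
inductive GenBA {A : Type u} [BooleanAlgebra A] (S : Set A) : A → Prop
  | base {a : A} : a ∈ S → GenBA S a
  | bot : GenBA S ⊥
  | compl {a : A} : GenBA S a → GenBA S aᶜ
  | inf {a b : A} : GenBA S a → GenBA S b → GenBA S (a ⊓ b)

/-- `Y` is 2-linked: any two of its elements have nonzero meet. -/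
def TwoLinked {A : Type u} [BooleanAlgebra A] (Y : Set A) : Prop :=
  ∀ a ∈ Y, ∀ b ∈ Y, a ⊓ b ≠ ⊥

/-- `Y` is centered: any finite nonempty subset has nonzero meet. -/
def Centered {A : Type u} [BooleanAlgebra A] (Y : Set A) : Prop :=
  ∀ s : Finset A, ↑s ⊆ Y → s.Nonempty → s.inf id ≠ ⊥

/-- The least cardinal `c` such that `S` can be covered by `c` many subsets of
`S` each satisfying `Q`. -/
noncomputable def covNum {A : Type u} [BooleanAlgebra A] (Q : Set A → Prop)
    (S : Set A) : Cardinal.{u} :=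
  sInf {c | ∃ P : Set (Set A), #P = c ∧ (∀ Y ∈ P, Y ⊆ S ∧ Q Y) ∧ S ⊆ ⋃₀ P}

namespace Stmt5Aux

variable {I : Type u} [LinearOrder I]

/-- Embedding of `I` into `WithBot (WithTop I)`. -/
def ι (z : I) : WithBot (WithTop I) := ((z : WithTop I) : WithBot (WithTop I))

/-- The generalized interval `[p, q)` pulled back to `I`. -/
def Itv (p q : WithBot (WithTop I)) : Set I := {z | p ≤ ι z ∧ ι z < q}

/-- `a` is a (possibly unbounded / empty) half-open interval. -/
def Good (a : Set I) : Prop := ∃ p q, a = Itv p q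

@[simp] lemma ι_le_ι {x z : I} : ι x ≤ ι z ↔ x ≤ z := by
  simp [ι]

@[simp] lemma ι_lt_ι {x z : I} : ι x < ι z ↔ x < z := by
  simp [ι]

@[simp] lemma bot_le_ι (z : I) : (⊥ : WithBot (WithTop I)) ≤ ι z := bot_le

@[simp] lemma ι_lt_top (z : I) :
    ι z < (⊤ : WithBot (WithTop I)) := by
  rw [← WithBot.coe_top, ι, WithBot.coe_lt_coe]
  exact WithTop.coe_lt_top z

@[simp] lemma not_top_le_ι (z : I) :
    ¬ (⊤ : WithBot (WithTop I)) ≤ ι z :=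
  fun h => absurd (lt_of_lt_of_le (ι_lt_top z) h) (lt_irrefl _)

@[simp] lemma not_ι_lt_bot (z : I) : ¬ ι z < (⊥ : WithBot (WithTop I)) := by
  simp [ι]

@[simp] lemma coe_coe_lt_top (z : I) :
    ((z : WithTop I) : WithBot (WithTop I)) < ⊤ := ι_lt_top z

@[simp] lemma ι_ne_top (z : I) : ι z ≠ (⊤ : WithBot (WithTop I)) :=
  ne_of_lt (ι_lt_top z)

@[simp] lemma coe_coe_ne_top (z : I) :
    ((z : WithTop I) : WithBot (WithTop I)) ≠ ⊤ := ι_ne_top z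

lemma good_Ico (x y : I) : Good (Set.Ico x y) :=
  ⟨ι x, ι y, by ext z; simp [Itv, Set.mem_Ico]⟩

lemma good_Ici (x : I) : Good (Set.Ici x) :=
  ⟨ι x, (⊤ : WithBot (WithTop I)), by ext z; simp [Itv]⟩

lemma good_Iio (y : I) : Good (Set.Iio y) :=
  ⟨⊥, ι y, by ext z; simp [Itv]⟩

lemma good_univ : Good (Set.univ : Set I) :=
  ⟨⊥, (⊤ : WithBot (WithTop I)), by ext z; simp [Itv]⟩

lemma good_inter {a b : Set I} (ha : Good a) (hb : Good b) : Good (a ∩ b) := by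
  obtain ⟨p, q, rfl⟩ := ha
  obtain ⟨p', q', rfl⟩ := hb
  refine ⟨p ⊔ p', q ⊓ q', ?_⟩
  ext z
  simp only [Itv, Set.mem_inter_iff, Set.mem_setOf_eq, sup_le_iff, lt_inf_iff]
  tauto

lemma good_compl {a : Set I} (ha : Good a) :
    ∃ g h : Set I, Good g ∧ Good h ∧ aᶜ = g ∪ h := by
  obtain ⟨p, q, rfl⟩ := ha
  refine ⟨Itv ⊥ p, Itv q (⊤ : WithBot (WithTop I)),
    ⟨_, _, rfl⟩, ⟨_, _, rfl⟩, ?_⟩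
  ext z
  simp only [Itv, Set.mem_compl_iff, Set.mem_setOf_eq, Set.mem_union,
    bot_le_ι, true_and, ι_lt_top, and_true, not_and, not_lt]
  constructor
  · intro h
    rcases le_or_gt p (ι z) with h1 | h1
    · exact Or.inr (h h1)
    · exact Or.inl h1
  · rintro (h | h)
    · intro h'; exact absurd h' (not_le.2 h)
    · intro _; exact h

/-- Finite unions of good sets. -/
inductive FU : Set I → Prop
  | good {a : Set I} : Good a → FU a
  | bot : FU (∅ : Set I)
  | union {a b : Set I} : FU a → FU b → FU (a ∪ b)

lemma FU_inter {a b : Set I} (ha : FU a) (hb : FU b) : FU (a ∩ b) := by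
  induction ha with
  | @good a hg =>
    induction hb with
    | good hg' => exact FU.good (good_inter hg hg')
    | bot => rw [Set.inter_empty]; exact FU.bot
    | union h1 h2 ih1 ih2 =>
      rw [Set.inter_union_distrib_left]; exact FU.union ih1 ih2
  | bot => rw [Set.empty_inter]; exact FU.bot
  | union h1 h2 ih1 ih2 =>
    rw [Set.union_inter_distrib_right]; exact FU.union ih1 ih2

lemma FU_compl {a : Set I} (ha : FU a) : FU aᶜ := by
  induction ha with
  | good hg =>
    obtain ⟨g, h, hg', hh', heq⟩ := good_compl hg
    rw [heq]; exact FU.union (FU.good hg') (FU.good hh')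
  | bot => rw [Set.compl_empty]; exact FU.good good_univ
  | union h1 h2 ih1 ih2 => rw [Set.compl_union]; exact FU_inter ih1 ih2

/-- The generating set from the theorem statement. -/
def gens (I : Type u) [LinearOrder I] : Set (Set I) :=
  {s | ∃ x y : I, s = Set.Ico x y} ∪ {s | ∃ x : I, s = Set.Ici x} ∪
    {s | ∃ y : I, s = Set.Iio y}

lemma genBA_FU {a : Set I} (h : GenBA (gens I) a) : FU a := by
  induction h with
  | base hb =>
    rcases hb with (⟨x, y, rfl⟩ | ⟨x, rfl⟩) | ⟨y, rfl⟩
    · exact FU.good (good_Ico x y)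
    · exact FU.good (good_Ici x)
    · exact FU.good (good_Iio y)
  | bot => exact FU.bot
  | compl _ ih => exact FU_compl ih
  | inf _ _ ih1 ih2 => exact FU_inter ih1 ih2

lemma good_genBA {a : Set I} (ha : Good a) : GenBA (gens I) a := by
  obtain ⟨p, q, rfl⟩ := ha
  have hbot : ∀ p q : WithBot (WithTop I), Itv p q = (∅ : Set I) →
      GenBA (gens I) (Itv p q) := fun p q h => h ▸ GenBA.bot
  have base1 : ∀ x y : I, GenBA (gens I) (Set.Ico x y) := fun x y =>
    GenBA.base (Or.inl (Or.inl ⟨x, y, rfl⟩))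
  have base2 : ∀ x : I, GenBA (gens I) (Set.Ici x) := fun x =>
    GenBA.base (Or.inl (Or.inr ⟨x, rfl⟩))
  have base3 : ∀ y : I, GenBA (gens I) (Set.Iio y) := fun y =>
    GenBA.base (Or.inr ⟨y, rfl⟩)
  induction p using WithBot.recBotCoe with
  | bot =>
    induction q using WithBot.recBotCoe with
    | bot => exact hbot _ _ (by ext z; simp [Itv])
    | coe q =>
      induction q using WithTop.recTopCoe with
      | top =>
        have : Itv (⊥ : WithBot (WithTop I)) ((⊤ : WithTop I) : WithBot (WithTop I))
            = ((∅ : Set I)ᶜ) := by ext z; simp [Itv]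
        rw [this]; exact GenBA.compl GenBA.bot
      | coe q =>
        have : Itv (⊥ : WithBot (WithTop I)) (((q : WithTop I) : WithBot (WithTop I)))
            = Set.Iio q := by ext z; simp [Itv, ι]
        rw [this]; exact base3 q
  | coe p =>
    induction p using WithTop.recTopCoe with
    | top => exact hbot _ _ (by ext z; simp [Itv])
    | coe p =>
      induction q using WithBot.recBotCoe with
      | bot => exact hbot _ _ (by ext z; simp [Itv])
      | coe q =>
        induction q using WithTop.recTopCoe with
        | top =>
          have : Itv (((p : WithTop I) : WithBot (WithTop I)))
              (((⊤ : WithTop I) : WithBot (WithTop I))) = Set.Ici p := by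
            ext z; simp [Itv, ι]
          rw [this]; exact base2 p
        | coe q =>
          have : Itv (((p : WithTop I) : WithBot (WithTop I)))
              (((q : WithTop I) : WithBot (WithTop I))) = Set.Ico p q := by
            ext z; simp [Itv, ι, Set.mem_Ico]
          rw [this]; exact base1 p q

lemma FU_exists {a : Set I} (h : FU a) (hne : a ≠ ∅) :
    ∃ g : Set I, g ⊆ a ∧ g ≠ ∅ ∧ Good g := by
  induction h with
  | good hg => exact ⟨_, subset_rfl, hne, hg⟩
  | bot => exact absurd rfl hne
  | @union a b h1 h2 ih1 ih2 =>
    by_cases ha : a = ∅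
    · have hb : b ≠ ∅ := by
        intro hb; apply hne; rw [ha, hb, Set.union_empty]
      obtain ⟨g, hg1, hg2, hg3⟩ := ih2 hb
      exact ⟨g, hg1.trans Set.subset_union_right, hg2, hg3⟩
    · obtain ⟨g, hg1, hg2, hg3⟩ := ih1 ha
      exact ⟨g, hg1.trans Set.subset_union_left, hg2, hg3⟩

lemma mem_finset_inf {α : Type v} {s : Finset (Set α)} {z : α} :
    z ∈ s.inf id ↔ ∀ g ∈ s, z ∈ g := by
  classical
  induction s using Finset.induction with
  | empty => simp
  | insert _ _ h ih => simp [Finset.inf_insert, Set.inf_eq_inter, ih]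

lemma helly (s : Finset (Set I)) (hne : s.Nonempty)
    (hg : ∀ g ∈ s, Good g)
    (hp : ∀ g ∈ s, ∀ h ∈ s, (g ∩ h : Set I) ≠ ∅) :
    s.inf id ≠ (∅ : Set I) := by
  classical
  choose! P Q hPQ using hg
  obtain ⟨g0, hg0, hmax⟩ := s.exists_max_image P hne
  obtain ⟨g1, hg1, hmin⟩ := s.exists_min_image Q hne
  obtain ⟨z, hz0, hz1⟩ := Set.nonempty_iff_ne_empty.2 (hp g0 hg0 g1 hg1)
  have h0 : z ∈ Itv (P g0) (Q g0) := (hPQ g0 hg0) ▸ hz0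
  have h1 : z ∈ Itv (P g1) (Q g1) := (hPQ g1 hg1) ▸ hz1
  have hzmem : z ∈ s.inf id := by
    rw [mem_finset_inf]
    intro g hgmem
    rw [hPQ g hgmem]
    exact ⟨le_trans (hmax g hgmem) h0.1, lt_of_lt_of_le h1.2 (hmin g hgmem)⟩
  exact fun h => by rw [h] at hzmem; exact hzmem

end Stmt5Aux

open Stmt5Aux in
/-- For the interval algebra `B(I)` of a linear order `I` (the algebra of
subsets of `I` generated by the half-open intervals `[x,y)`, including the
rays `[x,∞)` and `(-∞,y)`), the least number of 2-linked sets covering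
`B(I)∖{0}` equals the least number of centered sets covering `B(I)∖{0}`,
i.e. `d₂(B(I)) = d(B(I))`. -/
theorem stmt5 {I : Type u} [LinearOrder I] :
    covNum TwoLinked
        {a : Set I | GenBA ({s | ∃ x y : I, s = Set.Ico x y} ∪
          {s | ∃ x : I, s = Set.Ici x} ∪ {s | ∃ y : I, s = Set.Iio y}) a ∧ a ≠ ⊥} =
      covNum Centered
        {a : Set I | GenBA ({s | ∃ x y : I, s = Set.Ico x y} ∪
          {s | ∃ x : I, s = Set.Ici x} ∪ {s | ∃ y : I, s = Set.Iio y}) a ∧ a ≠ ⊥} := by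
  classical
  set S : Set (Set I) := {a : Set I | GenBA (gens I) a ∧ a ≠ ⊥} with hS
  show covNum TwoLinked S = covNum Centered S
  -- centered sets are 2-linked
  have centered_twoLinked : ∀ Y : Set (Set I), Centered Y → TwoLinked Y := by
    intro Y hY a ha b hb
    have := hY {a, b} (by
      intro x hx
      simp only [Finset.coe_insert, Finset.coe_singleton, Set.mem_insert_iff,
        Set.mem_singleton_iff] at hx
      rcases hx with rfl | rfl <;> assumption) ⟨a, by simp⟩
    simpa [Finset.inf_insert] using this
  have hsub : {c | ∃ P : Set (Set (Set I)), #P = c ∧ (∀ Y ∈ P, Y ⊆ S ∧ Centered Y)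
        ∧ S ⊆ ⋃₀ P} ⊆
      {c | ∃ P : Set (Set (Set I)), #P = c ∧ (∀ Y ∈ P, Y ⊆ S ∧ TwoLinked Y)
        ∧ S ⊆ ⋃₀ P} := by
    rintro c ⟨P, hP, h1, h2⟩
    exact ⟨P, hP, fun Y hY => ⟨(h1 Y hY).1, centered_twoLinked Y (h1 Y hY).2⟩, h2⟩
  -- a trivial centered cover: singletons
  have hCne : ∃ c, c ∈ {c | ∃ P : Set (Set (Set I)), #P = c ∧
      (∀ Y ∈ P, Y ⊆ S ∧ Centered Y) ∧ S ⊆ ⋃₀ P} := by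
    refine ⟨#((fun a => ({a} : Set (Set I))) '' S),
      (fun a => ({a} : Set (Set I))) '' S, rfl, ?_, ?_⟩
    · rintro Y ⟨a, ha, rfl⟩
      refine ⟨by simpa using ha, ?_⟩
      intro s hs hsne
      have hseq : s = {a} := by
        rw [Finset.eq_singleton_iff_nonempty_unique_mem]
        exact ⟨hsne, fun x hx => by simpa using hs hx⟩
      rw [hseq]
      simpa using ha.2
    · intro a ha
      exact ⟨{a}, ⟨a, ha, rfl⟩, rfl⟩
  obtain ⟨c₀, hc₀⟩ := hCne
  apply le_antisymm
  · exact csInf_le_csInf (OrderBot.bddBelow _) ⟨c₀, hc₀⟩ hsub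
  · apply le_csInf ⟨c₀, hsub hc₀⟩
    rintro c ⟨P, rfl, hP1, hP2⟩
    -- choose a good nonempty interval inside each nonzero element
    have hex : ∀ a : Set I, a ∈ S → ∃ g : Set I, g ⊆ a ∧ g ≠ ∅ ∧ Good g := by
      intro a ha
      exact FU_exists (genBA_FU ha.1) (by simpa [Set.bot_eq_empty] using ha.2)
    choose! σ hσ1 hσ2 hσ3 using hex
    have hσS : ∀ a ∈ S, σ a ∈ S := fun a ha =>
      ⟨good_genBA (hσ3 a ha), by simpa [Set.bot_eq_empty] using hσ2 a ha⟩
    set Z : Set (Set I) → Set (Set I) := fun Y => {a | a ∈ S ∧ σ a ∈ Y} with hZ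
    refine le_trans (csInf_le' ⟨Z '' P, rfl, ?_, ?_⟩) Cardinal.mk_image_le
    · rintro Y' ⟨Y, hY, rfl⟩
      refine ⟨fun a ha => ha.1, ?_⟩
      intro s hs hsne
      have hmemS : ∀ a ∈ s, a ∈ S := fun a ha => (hs ha).1
      have hmemY : ∀ a ∈ s, σ a ∈ Y := fun a ha => (hs ha).2
      have hG : ∀ g ∈ s.image σ, Good g := by
        intro g hg
        obtain ⟨a, ha, rfl⟩ := Finset.mem_image.1 hg
        exact hσ3 a (hmemS a ha)
      have hpair : ∀ g ∈ s.image σ, ∀ h ∈ s.image σ, (g ∩ h : Set I) ≠ ∅ := by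
        intro g hg h hh
        obtain ⟨a, ha, rfl⟩ := Finset.mem_image.1 hg
        obtain ⟨b, hb, rfl⟩ := Finset.mem_image.1 hh
        have := (hP1 Y hY).2 (σ a) (hmemY a ha) (σ b) (hmemY b hb)
        simpa [Set.inf_eq_inter, Set.bot_eq_empty] using this
      have hhelly := helly (s.image σ) (hsne.image σ) hG hpair
      obtain ⟨z, hz⟩ := Set.nonempty_iff_ne_empty.2 hhelly
      have hz' : ∀ a ∈ s, z ∈ a := by
        intro a ha
        have : z ∈ σ a := mem_finset_inf.1 hz (σ a) (Finset.mem_image_of_mem σ ha)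
        exact hσ1 a (hmemS a ha) this
      have : z ∈ s.inf id := mem_finset_inf.2 hz'
      simp only [Set.bot_eq_empty]
      exact fun h => by rw [h] at this; exact this
    · intro a ha
      have := hP2 (hσS a ha)
      obtain ⟨Y, hY, hmem⟩ := this
      exact ⟨Z Y, ⟨Y, hY, rfl⟩, ha, hmem⟩
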